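/- Counting lemma for ball covers: let Y be a connected metric space covered by N' balls of radius r whose centers lie in Y and are pairwise at distance > r from each other. Then the total 1-dimensional 'length' of Y (interpreted as the number of unit-length edges when Y is a connected graph with unit edges) is at least (N'−1)·r/2. -/

import Mathlib

open SimpleGraph

private lemma dist_getVert_le_aux {V : Type*} {G : SimpleGraph V} (hconn : G.Connected)
    {u v : V} (p : G.Walk u v) (d : ℕ) : G.dist u (p.getVert d) ≤ d := by
  induction p generalizing d with
  | nil => simp [SimpleGraph.Walk.getVert, SimpleGraph.dist_self]
  | @cons a b c h q ih =>
    cases d with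
    | zero => simp [SimpleGraph.Walk.getVert_zero]
    | succ d =>
      rw [SimpleGraph.Walk.getVert_cons_succ]
      calc G.dist a (q.getVert d) ≤ G.dist a b + G.dist b (q.getVert d) :=
            hconn.dist_triangle
        _ ≤ 1 + d := add_le_add
            (le_of_eq (SimpleGraph.dist_eq_one_iff_adj.mpr h)) (ih d)
        _ ≤ d + 1 := by omega

private lemma dist_getVert_right_aux {V : Type*} {G : SimpleGraph V}
    {u v : V} (p : G.Walk u v) (d : ℕ) : G.dist (p.getVert d) v ≤ p.length - d := by
  induction p generalizing d with
  | nil => simp [SimpleGraph.Walk.getVert, SimpleGraph.dist_self]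
  | @cons a b c h q ih =>
    cases d with
    | zero =>
      simpa [SimpleGraph.Walk.getVert_zero] using SimpleGraph.dist_le (q.cons h)
    | succ d =>
      rw [SimpleGraph.Walk.getVert_cons_succ]
      simpa using ih d

private lemma exists_vert_at_dist {V : Type*} {G : SimpleGraph V} (hconn : G.Connected)
    (u w : V) (d : ℕ) (hd : d ≤ G.dist u w) : ∃ v : V, G.dist u v = d := by
  obtain ⟨p, hp⟩ := hconn.exists_walk_length_eq_dist u w
  refine ⟨p.getVert d, le_antisymm (dist_getVert_le_aux hconn p d) ?_⟩
  have h1 := dist_getVert_right_aux p d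
  have h2 : G.dist u w ≤ G.dist u (p.getVert d) + G.dist (p.getVert d) w :=
    hconn.dist_triangle
  omega

private lemma connected_card_le {V : Type*} [Fintype V] (G : SimpleGraph V)
    [DecidableRel G.Adj] (hconn : G.Connected) (x0 : V) :
    Fintype.card V ≤ G.edgeFinset.card + 1 := by
  classical
  have key : ∀ v : V, v ≠ x0 → ∃ a : V, G.Adj v a ∧ G.dist a x0 < G.dist v x0 := by
    intro v hv
    have hdpos : G.dist v x0 ≠ 0 := by
      rw [SimpleGraph.dist_ne_zero_iff_ne_and_reachable]
      exact ⟨hv, hconn v x0⟩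
    obtain ⟨p, hp⟩ := hconn.exists_walk_length_eq_dist v x0
    have hnil : ¬ p.Nil := SimpleGraph.Walk.not_nil_of_ne hv
    refine ⟨p.getVert 1, SimpleGraph.Walk.adj_snd hnil, ?_⟩
    have h1 := dist_getVert_right_aux p 1
    omega
  choose a ha hlt using key
  have hmain : ({x0}ᶜ : Finset V).card ≤ G.edgeFinset.card := by
    apply Finset.card_le_card_of_injOn
      (fun v => if h : v = x0 then s(v, v) else s(v, a v h))
    · intro v hv
      simp only [Finset.mem_coe, Finset.mem_compl, Finset.mem_singleton] at hv
      beta_reduce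
      rw [dif_neg hv]
      simp only [Finset.mem_coe, SimpleGraph.mem_edgeFinset, SimpleGraph.mem_edgeSet]
      exact ha v hv
    · intro v hv w hw hvw
      simp only [Finset.coe_compl, Finset.coe_singleton, Set.mem_compl_iff,
        Set.mem_singleton_iff] at hv hw
      simp only at hvw
      rw [dif_neg hv, dif_neg hw, Sym2.eq_iff] at hvw
      rcases hvw with ⟨h1, _⟩ | ⟨h1, h2⟩
      · exact h1
      · exfalso
        have l1 := hlt v hv
        have l2 := hlt w hw
        rw [← h1] at l2
        rw [h2] at l1
        omega
  have : ({x0}ᶜ : Finset V).card = Fintype.card V - 1 := by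
    rw [Finset.card_compl, Finset.card_singleton]
  have hpos : 1 ≤ Fintype.card V := Fintype.card_pos_iff.mpr ⟨x0⟩
  omega

theorem ball_cover_edge_count
    {V : Type*} [Fintype V] (Y : SimpleGraph V) [DecidableRel Y.Adj]
    (hconn : Y.Connected)
    (N' r : ℕ) (hr : 1 ≤ r) (hN' : 2 ≤ N')
    (x : Fin N' → V)
    (hfar : ∀ i j : Fin N', i ≠ j → r < Y.dist (x i) (x j)) :
    (N' - 1) * r ≤ 2 * Y.edgeFinset.card := by
  classical
  set t := r / 2 with ht
  -- step 1: many vertices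
  have hex : ∀ (i : Fin N') (d : ℕ), d ≤ t → ∃ v : V, Y.dist (x i) v = d := by
    intro i d hd
    have hj : ∃ j : Fin N', j ≠ i := by
      by_cases h0 : (i : ℕ) = 0
      · exact ⟨⟨1, by omega⟩, by simp [Fin.ext_iff, h0]⟩
      · exact ⟨⟨0, by omega⟩, by simp [Fin.ext_iff, h0]; omega⟩
    obtain ⟨j, hj⟩ := hj
    have := hfar i j (Ne.symm hj)
    exact exists_vert_at_dist hconn (x i) (x j) d (by omega)
  choose f hf using fun (i : Fin N') (d : Fin (t + 1)) =>
    hex i d.val (by omega)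
  have hinjf : Function.Injective (fun p : Fin N' × Fin (t + 1) => f p.1 p.2) := by
    rintro ⟨i, d⟩ ⟨j, e⟩ h
    simp only at h
    by_cases hij : i = j
    · subst hij
      have : (d : ℕ) = (e : ℕ) := by
        rw [← hf i d, ← hf i e, h]
      exact Prod.ext rfl (Fin.ext this)
    · exfalso
      have h1 : Y.dist (x i) (x j) ≤ Y.dist (x i) (f i d) + Y.dist (f i d) (x j) :=
        hconn.dist_triangle
      have h2 : Y.dist (f i d) (x j) = Y.dist (x j) (f j e) := by
        rw [h, SimpleGraph.dist_comm]
      have h3 := hfar i j hij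
      have hd := hf i d
      have he := hf j e
      have hdt : (d : ℕ) ≤ t := by omega
      have het : (e : ℕ) ≤ t := by omega
      rw [hd] at h1
      rw [he] at h2
      omega
  have hcard1 : N' * (t + 1) ≤ Fintype.card V := by
    have := Fintype.card_le_of_injective _ hinjf
    simpa using this
  have hcard2 : Fintype.card V ≤ Y.edgeFinset.card + 1 :=
    connected_card_le Y hconn (x ⟨0, by omega⟩)
  have hrt : r ≤ 2 * t + 1 := by omega
  obtain ⟨M, hM⟩ : ∃ M, N' = M + 2 := ⟨N' - 2, by omega⟩
  subst hM
  have : (M + 1) * r ≤ (M + 1) * (2 * t + 1) := Nat.mul_le_mul_left _ hrt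
  have hsub : M + 2 - 1 = M + 1 := by omega
  calc (M + 2 - 1) * r = (M + 1) * r := by rw [hsub]
    _ ≤ (M + 1) * (2 * t + 1) := this
    _ ≤ 2 * Y.edgeFinset.card := by nlinarith [hcard1, hcard2]
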